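/- Suppose q ≤ μ. Then Z(x) − q·W(x) ≥ e^{γ₁x} > 0 for every x ≥ 0; in particular the equation Z(z) = q·W(z) has no solution z ∈ (0,∞), i.e. k* := inf{z ∈ ℝ : Z(z) ≤ q W(z)} = +∞. -/

import Mathlib

open Real Filter Set MeasureTheory

noncomputable def dlt (σ μ q : ℝ) : ℝ := Real.sqrt ((μ / σ ^ 2 - 1 / 2) ^ 2 + 2 * q / σ ^ 2)

noncomputable def gma (σ μ : ℝ) : ℝ := 1 / 2 - μ / σ ^ 2

noncomputable def gma1 (σ μ q : ℝ) : ℝ := gma σ μ - dlt σ μ q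

noncomputable def gma2 (σ μ q : ℝ) : ℝ := gma σ μ + dlt σ μ q

/-- The scale function `W^{(q)}` of `X_t = (μ - σ²/2) t + σ B_t`. -/
noncomputable def W (σ μ q : ℝ) (x : ℝ) : ℝ :=
  if 0 ≤ x then 2 / (σ ^ 2 * dlt σ μ q) * Real.exp (gma σ μ * x) * Real.sinh (dlt σ μ q * x)
  else 0

/-- The scale function `Z^{(q)}` of `X_t = (μ - σ²/2) t + σ B_t`. -/
noncomputable def Z (σ μ q : ℝ) (x : ℝ) : ℝ :=
  if 0 ≤ x then
    Real.exp (gma σ μ * x) * Real.cosh (dlt σ μ q * x)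
      - gma σ μ / dlt σ μ q * Real.exp (gma σ μ * x) * Real.sinh (dlt σ μ q * x)
  else 1

/-- `k* = (γ₂ - γ₁)⁻¹ log((1 - 1/γ₁)/(1 - 1/γ₂))`. -/
noncomputable def kstar (σ μ q : ℝ) : ℝ :=
  (gma2 σ μ q - gma1 σ μ q)⁻¹ *
    Real.log ((1 - 1 / gma1 σ μ q) / (1 - 1 / gma2 σ μ q))

theorem stmt_9 (σ μ q : ℝ) (hσ : 0 < σ) (hq : 0 < q) (hqμ : q ≤ μ) :
    (∀ x : ℝ, 0 ≤ x →
      Real.exp (gma1 σ μ q * x) ≤ Z σ μ q x - q * W σ μ q x ∧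
      0 < Real.exp (gma1 σ μ q * x)) ∧
    (¬ ∃ z : ℝ, 0 < z ∧ Z σ μ q z = q * W σ μ q z) ∧
    {z : ℝ | Z σ μ q z ≤ q * W σ μ q z} = ∅ := by
  have hσ2 : (0:ℝ) < σ ^ 2 := by positivity
  have hargpos : (0:ℝ) < (μ / σ ^ 2 - 1 / 2) ^ 2 + 2 * q / σ ^ 2 := by positivity
  have hd : 0 < dlt σ μ q := Real.sqrt_pos.mpr hargpos
  have hδsq : (dlt σ μ q) ^ 2 = (μ / σ ^ 2 - 1 / 2) ^ 2 + 2 * q / σ ^ 2 :=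
    Real.sq_sqrt hargpos.le
  have key : gma σ μ + 2 * q / σ ^ 2 ≤ dlt σ μ q := by
    have h1 : (gma σ μ + 2 * q / σ ^ 2) ^ 2 ≤ (dlt σ μ q) ^ 2 := by
      rw [hδsq, gma]
      have hμq : 0 ≤ μ / σ ^ 2 - q / σ ^ 2 := by
        rw [sub_nonneg]
        gcongr
      have hqσ : 0 ≤ q / σ ^ 2 := by positivity
      have h := mul_nonneg hqσ hμq
      have hr : (1 / 2 - μ / σ ^ 2 + 2 * (q / σ ^ 2)) ^ 2
          - ((μ / σ ^ 2 - 1 / 2) ^ 2 + 2 * (q / σ ^ 2))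
          = -4 * (q / σ ^ 2 * (μ / σ ^ 2 - q / σ ^ 2)) := by ring
      have h2q : 2 * q / σ ^ 2 = 2 * (q / σ ^ 2) := by ring
      rw [h2q]
      nlinarith [h, hr]
    nlinarith [hd, h1]
  have main : ∀ x : ℝ, 0 ≤ x →
      Real.exp (gma1 σ μ q * x) ≤ Z σ μ q x - q * W σ μ q x := by
    intro x hx
    rw [Z, W, if_pos hx, if_pos hx]
    have hs : 0 ≤ Real.sinh (dlt σ μ q * x) := Real.sinh_nonneg_iff.mpr (by positivity)
    have he : 0 < Real.exp (gma σ μ * x) := Real.exp_pos _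
    have he1 : Real.exp (gma1 σ μ q * x)
        = Real.exp (gma σ μ * x) * (Real.cosh (dlt σ μ q * x) - Real.sinh (dlt σ μ q * x)) := by
      rw [Real.cosh_sub_sinh, ← Real.exp_add, gma1]
      ring_nf
    rw [he1]
    have h2 : gma σ μ / dlt σ μ q + 2 * q / σ ^ 2 / dlt σ μ q ≤ 1 := by
      rw [← add_div, div_le_one hd]
      exact key
    have h3 : 0 ≤ Real.exp (gma σ μ * x) * Real.sinh (dlt σ μ q * x) *
        (1 - (gma σ μ / dlt σ μ q + 2 * q / σ ^ 2 / dlt σ μ q)) :=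
      mul_nonneg (mul_nonneg he.le hs) (by linarith)
    have hne : (σ ^ 2 : ℝ) ≠ 0 := ne_of_gt hσ2
    have hdn : dlt σ μ q ≠ 0 := ne_of_gt hd
    have heq : Real.exp (gma σ μ * x) * Real.cosh (dlt σ μ q * x)
        - gma σ μ / dlt σ μ q * Real.exp (gma σ μ * x) * Real.sinh (dlt σ μ q * x)
        - q * (2 / (σ ^ 2 * dlt σ μ q) * Real.exp (gma σ μ * x) * Real.sinh (dlt σ μ q * x))
        - Real.exp (gma σ μ * x) * (Real.cosh (dlt σ μ q * x) - Real.sinh (dlt σ μ q * x))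
        = Real.exp (gma σ μ * x) * Real.sinh (dlt σ μ q * x) *
          (1 - (gma σ μ / dlt σ μ q + 2 * q / σ ^ 2 / dlt σ μ q)) := by
      field_simp
      ring
    linarith [h3, heq.ge, heq.le]
  refine ⟨fun x hx => ⟨main x hx, Real.exp_pos _⟩, ?_, ?_⟩
  · rintro ⟨z, hz, hzeq⟩
    have h := main z hz.le
    rw [hzeq] at h
    simp at h
    exact absurd h (not_le.mpr (Real.exp_pos _))
  · ext z
    simp only [Set.mem_setOf_eq, Set.mem_empty_iff_false, iff_false, not_le]
    rcases le_or_gt 0 z with hz | hz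
    · have h := main z hz
      have := Real.exp_pos (gma1 σ μ q * z)
      linarith
    · rw [Z, W, if_neg (not_le.mpr hz), if_neg (not_le.mpr hz)]
      norm_num
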